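/- Let (X,d) be a geodesic metric space and φ : X → ℝ a Kantorovich potential. Suppose x, y, z ∈ X and t ∈ (0,1) satisfy d(x,y)²/(2t) − φ(y) = φ^c(z) − d(x,z)²/(2(1−t)). Then x is a t-intermediate point between y and z, namely d(y,z) = d(x,y)/t = d(x,z)/(1−t), and there exists a φ-Kantorovich geodesic γ with γ_0 = y, γ_t = x and γ_1 = z. -/

import Mathlib

/-- `ψ` is pointwise the `c`-transform of `φ` for the cost `c = d²/2`:
at every point `x`, `ψ x` is a genuine (finite) infimum of `d(x,y)²/2 - φ(y)` over `y`. -/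
def IsCTransform {X : Type*} [MetricSpace X] (φ ψ : X → ℝ) : Prop :=
  ∀ x : X, IsGLB {v : ℝ | ∃ y : X, v = dist x y ^ 2 / 2 - φ y} (ψ x)

/-- `φ` is a Kantorovich potential with (real-valued) conjugate potential `φc`. -/
def IsKantorovichPair {X : Type*} [MetricSpace X] (φ φc : X → ℝ) : Prop :=
  IsCTransform φ φc ∧ IsCTransform φc φ

/-- A constant-speed geodesic parametrized on `[0,1]`. -/
def IsGeodesic {X : Type*} [MetricSpace X] (γ : ℝ → X) : Prop :=
  ∀ s ∈ Set.Icc (0:ℝ) 1, ∀ t ∈ Set.Icc (0:ℝ) 1,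
    dist (γ s) (γ t) = |s - t| * dist (γ 0) (γ 1)

/-- A `φ`-Kantorovich geodesic: a geodesic with `φ(γ₀) + φ^c(γ₁) = ℓ(γ)²/2`,
where `ℓ(γ) = d(γ₀,γ₁)`. -/
def IsKantorovichGeodesic {X : Type*} [MetricSpace X] (φ φc : X → ℝ) (γ : ℝ → X) : Prop :=
  IsGeodesic γ ∧ φ (γ 0) + φc (γ 1) = dist (γ 0) (γ 1) ^ 2 / 2

/-- A metric space is geodesic if every pair of points is joined by a geodesic. -/
def IsGeodesicSpace (X : Type*) [MetricSpace X] : Prop :=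
  ∀ x y : X, ∃ γ : ℝ → X, IsGeodesic γ ∧ γ 0 = x ∧ γ 1 = y

/-- The interpolating intermediate-time Kantorovich potential
`φ_t(x) = -inf_y (d(x,y)²/(2t) - φ(y))` for `t ≠ 0`, and `φ_0 = φ`. -/
noncomputable def interpPotential {X : Type*} [MetricSpace X] (φ : X → ℝ) (t : ℝ) (x : X) : ℝ :=
  if t = 0 then φ x
  else -sInf {v : ℝ | ∃ y : X, v = dist x y ^ 2 / (2 * t) - φ y}

/-- The time-reversed interpolating Kantorovich potential
`φ̄_t(x) = inf_y (d(x,y)²/(2(1-t)) - φ^c(y))` for `t ≠ 1`, and `φ̄_1 = -φ^c`. -/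
noncomputable def reversePotential {X : Type*} [MetricSpace X] (φc : X → ℝ) (t : ℝ) (x : X) : ℝ :=
  if t = 1 then -φc x
  else sInf {v : ℝ | ∃ y : X, v = dist x y ^ 2 / (2 * (1 - t)) - φc y}

lemma glue_geodesic {X : Type*} [MetricSpace X] (γ₁ γ₂ : ℝ → X) (t : ℝ)
    (ht0 : 0 < t) (ht1 : t < 1)
    (h1 : IsGeodesic γ₁) (h2 : IsGeodesic γ₂) (hmid : γ₁ 1 = γ₂ 0)
    (hlen1 : dist (γ₁ 0) (γ₁ 1) = t * dist (γ₁ 0) (γ₂ 1))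
    (hlen2 : dist (γ₂ 0) (γ₂ 1) = (1 - t) * dist (γ₁ 0) (γ₂ 1)) :
    ∃ γ : ℝ → X, IsGeodesic γ ∧ γ 0 = γ₁ 0 ∧ γ t = γ₁ 1 ∧ γ 1 = γ₂ 1 := by
  classical
  set D := dist (γ₁ 0) (γ₂ 1) with hDdef
  have hD : 0 ≤ D := dist_nonneg
  have ht0' : t ≠ 0 := ne_of_gt ht0
  have h1t : (0:ℝ) < 1 - t := by linarith
  have h1t' : (1:ℝ) - t ≠ 0 := ne_of_gt h1t
  set γ : ℝ → X := fun s => if s ≤ t then γ₁ (s/t) else γ₂ ((s-t)/(1-t)) with hγdef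
  have hγle : ∀ s, s ≤ t → γ s = γ₁ (s/t) := fun s hs => if_pos hs
  have hγgt : ∀ s, t < s → γ s = γ₂ ((s-t)/(1-t)) := fun s hs => if_neg (not_le.mpr hs)
  have h0 : γ 0 = γ₁ 0 := by rw [hγle 0 ht0.le, zero_div]
  have hγt : γ t = γ₁ 1 := by rw [hγle t le_rfl, div_self ht0']
  have hγ1 : γ 1 = γ₂ 1 := by rw [hγgt 1 ht1, div_self h1t']
  have seg1 : ∀ u, 0 ≤ u → u ≤ t → ∀ v, 0 ≤ v → v ≤ t →
      dist (γ₁ (u/t)) (γ₁ (v/t)) = |u - v| * D := by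
    intro u hu hut v hv hvt
    rw [h1 (u/t) ⟨div_nonneg hu ht0.le, (div_le_one ht0).mpr hut⟩
        (v/t) ⟨div_nonneg hv ht0.le, (div_le_one ht0).mpr hvt⟩, hlen1]
    rw [div_sub_div_same, abs_div, abs_of_pos ht0]
    field_simp
  have seg2 : ∀ u, t ≤ u → u ≤ 1 → ∀ v, t ≤ v → v ≤ 1 →
      dist (γ₂ ((u-t)/(1-t))) (γ₂ ((v-t)/(1-t))) = |u - v| * D := by
    intro u hu hut v hv hvt
    rw [h2 ((u-t)/(1-t)) ⟨div_nonneg (by linarith) h1t.le, (div_le_one h1t).mpr (by linarith)⟩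
        ((v-t)/(1-t)) ⟨div_nonneg (by linarith) h1t.le, (div_le_one h1t).mpr (by linarith)⟩,
      hlen2]
    have e : (u-t)/(1-t) - (v-t)/(1-t) = (u - v)/(1-t) := by field_simp; ring
    rw [e, abs_div, abs_of_pos h1t]
    field_simp
  have claim : ∀ s, 0 ≤ s → ∀ s', s' ≤ 1 → s ≤ s' → dist (γ s) (γ s') = (s' - s) * D := by
    intro s hs s' hs' hss
    rcases le_or_gt s' t with h' | h'
    · rw [hγle s (hss.trans h'), hγle s' h', seg1 s hs (hss.trans h') s' (hs.trans hss) h',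
        abs_of_nonpos (by linarith), neg_sub]
    · rcases le_or_gt s t with h'' | h''
      · rw [hγle s h'', hγgt s' h']
        have d1 : dist (γ₁ (s/t)) (γ₁ 1) = (t - s) * D := by
          have hh := seg1 s hs h'' t ht0.le le_rfl
          rwa [div_self ht0', abs_of_nonpos (by linarith), neg_sub] at hh
        have d2 : dist (γ₂ 0) (γ₂ ((s'-t)/(1-t))) = (s' - t) * D := by
          have hh := seg2 t le_rfl (by linarith) s' h'.le hs'
          rwa [sub_self, zero_div, abs_of_nonpos (by linarith), neg_sub] at hh
        have d3 : dist (γ₁ 0) (γ₁ (s/t)) = s * D := by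
          have hh := seg1 0 le_rfl ht0.le s hs h''
          rwa [zero_div, zero_sub, abs_neg, abs_of_nonneg hs] at hh
        have d4 : dist (γ₂ ((s'-t)/(1-t))) (γ₂ 1) = (1 - s') * D := by
          have hh := seg2 s' h'.le hs' 1 (by linarith) le_rfl
          rwa [div_self h1t', abs_of_nonpos (by linarith), neg_sub] at hh
        have hub : dist (γ₁ (s/t)) (γ₂ ((s'-t)/(1-t))) ≤ (s' - s) * D := by
          calc dist (γ₁ (s/t)) (γ₂ ((s'-t)/(1-t)))
              ≤ dist (γ₁ (s/t)) (γ₁ 1) + dist (γ₁ 1) (γ₂ ((s'-t)/(1-t))) := dist_triangle _ _ _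
            _ = (t - s) * D + (s' - t) * D := by rw [d1, hmid, d2]
            _ = (s' - s) * D := by ring
        have hlb : D ≤ s * D + dist (γ₁ (s/t)) (γ₂ ((s'-t)/(1-t))) + (1 - s') * D := by
          calc D = dist (γ₁ 0) (γ₂ 1) := hDdef
            _ ≤ dist (γ₁ 0) (γ₁ (s/t)) + dist (γ₁ (s/t)) (γ₂ ((s'-t)/(1-t)))
                + dist (γ₂ ((s'-t)/(1-t))) (γ₂ 1) := dist_triangle4 _ _ _ _
            _ = _ := by rw [d3, d4]
        linarith
      · rw [hγgt s h'', hγgt s' h', seg2 s h''.le (hss.trans hs') s' (h''.le.trans hss) hs',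
          abs_of_nonpos (by linarith), neg_sub]
  have hend : dist (γ 0) (γ 1) = D := by rw [h0, hγ1]
  refine ⟨γ, ?_, h0, hγt, hγ1⟩
  intro s hs s' hs'
  rw [hend]
  rcases le_total s s' with hle | hle
  · rw [claim s hs.1 s' hs'.2 hle, abs_of_nonpos (by linarith), neg_sub]
  · rw [dist_comm, claim s' hs'.1 s hs.2 hle, abs_of_nonneg (by linarith)]

/-- Let `(X,d)` be a geodesic space and `φ` a Kantorovich potential. If
`d(x,y)²/(2t) - φ(y) = φ^c(z) - d(x,z)²/(2(1-t))` for some `t ∈ (0,1)`, then `x` is a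
`t`-intermediate point between `y` and `z`, and there is a `φ`-Kantorovich geodesic `γ`
with `γ_0 = y`, `γ_t = x`, `γ_1 = z`. -/
theorem statement1 {X : Type*} [MetricSpace X] (hgeo : IsGeodesicSpace X)
    (φ φc : X → ℝ) (hpair : IsKantorovichPair φ φc)
    (x y z : X) (t : ℝ) (ht : t ∈ Set.Ioo (0:ℝ) 1)
    (h : dist x y ^ 2 / (2 * t) - φ y = φc z - dist x z ^ 2 / (2 * (1 - t))) :
    dist y z = dist x y / t ∧ dist y z = dist x z / (1 - t) ∧
      ∃ γ : ℝ → X, IsKantorovichGeodesic φ φc γ ∧ γ 0 = y ∧ γ t = x ∧ γ 1 = z := by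
  obtain ⟨ht0, ht1⟩ := ht
  have h1t : (0:ℝ) < 1 - t := by linarith
  set a := dist x y with ha_def
  set b := dist x z with hb_def
  set D := dist y z with hD_def
  have ha : 0 ≤ a := dist_nonneg
  have hb : 0 ≤ b := dist_nonneg
  have hD : 0 ≤ D := dist_nonneg
  have hsum : a^2/(2*t) + b^2/(2*(1-t)) = φ y + φc z := by linarith
  have hle : φ y + φc z ≤ D^2/2 := by
    have hmem : D^2/2 - φc z ∈ {v : ℝ | ∃ w : X, v = dist y w ^ 2 / 2 - φc w} := ⟨z, rfl⟩
    have := hpair.2 y |>.1 hmem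
    linarith
  have htri : D ≤ a + b := by
    calc D ≤ dist y x + dist x z := dist_triangle _ _ _
      _ = a + b := by rw [dist_comm y x]
  have hsq : D^2 ≤ (a+b)^2 := by nlinarith
  have hchain : a^2/(2*t) + b^2/(2*(1-t)) ≤ D^2/2 := by linarith
  have hchain' : a^2*(1-t) + b^2*t ≤ D^2*(t*(1-t)) := by
    have h3 := mul_le_mul_of_nonneg_right hchain (by positivity : (0:ℝ) ≤ 2*(t*(1-t)))
    have e1 : (a^2/(2*t) + b^2/(2*(1-t))) * (2*(t*(1-t))) = a^2*(1-t) + b^2*t := by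
      field_simp
    have e2 : D^2/2 * (2*(t*(1-t))) = D^2*(t*(1-t)) := by ring
    rw [e1, e2] at h3
    exact h3
  have hz : (a*(1-t) - b*t)^2 ≤ 0 := by
    nlinarith [mul_le_mul_of_nonneg_right hsq (mul_pos ht0 h1t).le, hchain']
  have h0 : (a*(1-t) - b*t)^2 = 0 := le_antisymm hz (sq_nonneg _)
  have hz' : a*(1-t) = b*t := by
    have := (pow_eq_zero_iff two_ne_zero).mp h0
    linarith
  have hsq2 : (a+b)^2 ≤ D^2 := by
    nlinarith [hchain', h0, mul_pos ht0 h1t]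
  have hab : a + b ≤ D := by nlinarith [hsq2, hD, ha, hb]
  have hDab : D = a + b := le_antisymm htri hab
  have ha2 : a = t * D := by rw [hDab]; linear_combination hz'
  have hb2 : b = (1-t) * D := by rw [hDab]; linear_combination (-1 : ℝ) * hz'
  have hpot : φ y + φc z = D^2/2 := by
    have e : a^2/(2*t) + b^2/(2*(1-t)) = D^2/2 := by
      rw [ha2, hb2]; field_simp; ring
    linarith
  refine ⟨?_, ?_, ?_⟩
  · rw [ha2]; field_simp
  · rw [hb2]; field_simp
  · obtain ⟨γ₁, hg1, hg10, hg11⟩ := hgeo y x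
    obtain ⟨γ₂, hg2, hg20, hg21⟩ := hgeo x z
    obtain ⟨γ, hgeoγ, hγ0, hγt, hγ1⟩ := glue_geodesic γ₁ γ₂ t ht0 ht1 hg1 hg2
      (by rw [hg11, hg20])
      (by rw [hg10, hg11, hg21, dist_comm y x]; exact ha2)
      (by rw [hg10, hg20, hg21]; exact hb2)
    rw [hg10] at hγ0
    rw [hg11] at hγt
    rw [hg21] at hγ1
    refine ⟨γ, ⟨hgeoγ, ?_⟩, hγ0, hγt, hγ1⟩
    rw [hγ0, hγ1]
    exact hpot
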